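/- Let k > l be natural numbers, ξ a complex number, and f : ℕ → ℝ≥0. Suppose there exist κ > 0 and N ∈ ℕ such that f(n) ≥ κ|ξ|β^{kl}_n for all n ≥ N. Then for every finitely supported sequence (c_n) of complex numbers, with ψ = ∑ c_n φ_n in ℓ²(ℕ), the inequality ‖ξ(a†)^k a^l ψ + ξ*(a†)^l a^k ψ‖ ≤ (2/κ)‖f(a†a)ψ‖ + 2|ξ|β^{kl}_{N-1}‖ψ‖ holds. -/

import Mathlib

open scoped ENNReal InnerProductSpace

/-- Pochhammer symbol `(x,s) = x(x+1)⋯(x+s-1)` for an integer starting value. -/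
def poch (x : ℤ) (s : ℕ) : ℤ := ∏ i ∈ Finset.range s, (x + i)

/-- `β^{kl}_n = sqrt((n-l+1,l)·(n-l+1,k))`; `betaKL l k n` is `β^{lk}_n`. -/
noncomputable def betaKL (k l n : ℕ) : ℝ :=
  Real.sqrt (((poch ((n : ℤ) - l + 1) l * poch ((n : ℤ) - l + 1) k : ℤ) : ℝ))

instance : Fact (1 ≤ (2 : ℝ≥0∞)) := ⟨by norm_num⟩

/-- The standard basis vector `φ_n` of `ℓ²(ℕ)`. -/
noncomputable def φ (n : ℕ) : lp (fun _ : ℕ => ℂ) 2 := lp.single 2 n 1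

lemma poch_eq_zero {x : ℤ} {s : ℕ} (hx : x ≤ 0) (h : 0 ≤ x + s - 1) : poch x s = 0 := by
  have hi : (-x).toNat ∈ Finset.range s := by rw [Finset.mem_range]; omega
  exact Finset.prod_eq_zero hi (by omega)

lemma poch_nonneg {x : ℤ} {s : ℕ} (h : 0 ≤ x + s - 1) : 0 ≤ poch x s := by
  rcases le_or_gt x 0 with hx | hx
  · rw [poch_eq_zero hx h]
  · exact Finset.prod_nonneg fun i _ => by omega

lemma poch_mono {x y : ℤ} {s : ℕ} (h : 0 ≤ x + s - 1) (hxy : x ≤ y) :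
    poch x s ≤ poch y s := by
  rcases le_or_gt x 0 with hx | hx
  · rw [poch_eq_zero hx h]
    exact poch_nonneg (by omega)
  · exact Finset.prod_le_prod (fun i _ => by omega) (fun i _ => by omega)

lemma betaKL_nonneg (k l n : ℕ) : 0 ≤ betaKL k l n := Real.sqrt_nonneg _

lemma betaKL_mono {k l : ℕ} (hlk : l ≤ k) {n m : ℕ} (hnm : n ≤ m) :
    betaKL k l n ≤ betaKL k l m := by
  apply Real.sqrt_le_sqrt
  have h1 : poch ((n:ℤ) - l + 1) l ≤ poch ((m:ℤ) - l + 1) l :=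
    poch_mono (by omega) (by omega)
  have h2 : poch ((n:ℤ) - l + 1) k ≤ poch ((m:ℤ) - l + 1) k :=
    poch_mono (by omega) (by omega)
  have p2 : (0:ℤ) ≤ poch ((n:ℤ) - l + 1) k := poch_nonneg (by omega)
  have q1 : (0:ℤ) ≤ poch ((m:ℤ) - l + 1) l := poch_nonneg (by omega)
  exact_mod_cast mul_le_mul h1 h2 p2 q1

lemma betaKL_lk_eq_zero {k l n : ℕ} (h : n < k) : betaKL l k n = 0 := by
  unfold betaKL
  rw [poch_eq_zero (x := (n:ℤ) - k + 1) (s := k) (by omega) (by omega)]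
  simp

lemma betaKL_le {k l : ℕ} (hlk : l ≤ k) (n : ℕ) : betaKL l k n ≤ betaKL k l n := by
  rcases lt_or_ge n k with h | h
  · rw [betaKL_lk_eq_zero h]
    exact betaKL_nonneg _ _ _
  · apply Real.sqrt_le_sqrt
    have h1 : poch ((n:ℤ) - k + 1) k ≤ poch ((n:ℤ) - l + 1) k :=
      poch_mono (by omega) (by omega)
    have h2 : poch ((n:ℤ) - k + 1) l ≤ poch ((n:ℤ) - l + 1) l :=
      poch_mono (by omega) (by omega)
    have p2 : (0:ℤ) ≤ poch ((n:ℤ) - k + 1) l := poch_nonneg (by omega)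
    have q1 : (0:ℤ) ≤ poch ((n:ℤ) - l + 1) k := poch_nonneg (by omega)
    have key := mul_le_mul h1 h2 p2 q1
    have h3 : poch ((n:ℤ) - k + 1) k * poch ((n:ℤ) - k + 1) l
        ≤ poch ((n:ℤ) - l + 1) l * poch ((n:ℤ) - l + 1) k := by
      calc poch ((n:ℤ) - k + 1) k * poch ((n:ℤ) - k + 1) l
          ≤ poch ((n:ℤ) - l + 1) k * poch ((n:ℤ) - l + 1) l := key
        _ = poch ((n:ℤ) - l + 1) l * poch ((n:ℤ) - l + 1) k := mul_comm _ _
    exact_mod_cast h3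

lemma phi_orthonormal : Orthonormal ℂ φ := by
  rw [orthonormal_iff_ite]
  intro i j
  classical
  simp only [φ]
  rw [lp.inner_single_left]
  by_cases h : i = j
  · subst h
    simp [lp.single_apply_self]
  · rw [lp.single_apply_ne 2 j 1 h]
    simp [h]

lemma onb_norm_sum (b : ℕ → ℂ) (t : Finset ℕ) :
    ‖∑ m ∈ t, b m • φ m‖ ^ 2 = ∑ m ∈ t, ‖b m‖ ^ 2 := by
  have h1 : ⟪∑ m ∈ t, b m • φ m, ∑ m ∈ t, b m • φ m⟫_ℂ
      = ∑ m ∈ t, (starRingEnd ℂ) (b m) * b m := by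
    rw [sum_inner]
    refine Finset.sum_congr rfl fun m hm => ?_
    rw [inner_smul_left, phi_orthonormal.inner_right_sum b hm]
  rw [norm_sq_eq_re_inner (𝕜 := ℂ), h1, map_sum]
  refine Finset.sum_congr rfl fun m _ => ?_
  rw [RCLike.conj_mul]
  norm_cast

lemma norm_sum_sq (a : ℕ → ℂ) (s : Finset ℕ) (v : ℕ → ℕ) (hv : Set.InjOn v s) :
    ‖∑ n ∈ s, a n • φ (v n)‖ ^ 2 = ∑ n ∈ s, ‖a n‖ ^ 2 := by
  classical
  have key : ∑ n ∈ s, a n • φ (v n)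
      = ∑ m ∈ s.image v, a (Function.invFunOn v s m) • φ m := by
    rw [Finset.sum_image (fun x hx y hy h => hv hx hy h)]
    refine Finset.sum_congr rfl fun n hn => ?_
    rw [hv.leftInvOn_invFunOn hn]
  rw [key, onb_norm_sum, Finset.sum_image (fun x hx y hy h => hv hx hy h)]
  refine Finset.sum_congr rfl fun n hn => ?_
  rw [hv.leftInvOn_invFunOn hn]

lemma sqrt_add_le' {x y : ℝ} (hx : 0 ≤ x) (hy : 0 ≤ y) :
    Real.sqrt (x + y) ≤ Real.sqrt x + Real.sqrt y := by
  rw [show Real.sqrt x + Real.sqrt y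
      = Real.sqrt ((Real.sqrt x + Real.sqrt y) ^ 2) from
      (Real.sqrt_sq (by positivity)).symm]
  apply Real.sqrt_le_sqrt
  nlinarith [Real.sq_sqrt hx, Real.sq_sqrt hy, Real.sqrt_nonneg x, Real.sqrt_nonneg y]

set_option maxHeartbeats 1000000 in
theorem stmt6 (k l N : ℕ) (hlk : l < k) (ξ : ℂ) (f : ℕ → ℝ)
    (hf0 : ∀ n, 0 ≤ f n) (κ : ℝ) (hκ : 0 < κ)
    (hfN : ∀ n, N ≤ n → κ * ‖ξ‖ * betaKL k l n ≤ f n)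
    (c : ℕ →₀ ℂ) :
    ‖(∑ n ∈ c.support, (c n * ξ * betaKL k l n) • φ (n + k - l)) +
        (∑ n ∈ c.support, (c n * (starRingEnd ℂ ξ) * betaKL l k n) • φ (n - k + l))‖ ≤
      (2 / κ) * ‖∑ n ∈ c.support, (c n * f n) • φ n‖ +
        2 * ‖ξ‖ * betaKL k l (N - 1) * ‖∑ n ∈ c.support, (c n) • φ n‖ := by
  classical
  set s := c.support with hs
  set β := betaKL k l with hβ
  set βN1 := betaKL k l (N - 1) with hβN1
  set S1 := ∑ n ∈ s, (c n * ξ * β n) • φ (n + k - l) with hS1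
  set S2 := ∑ n ∈ s, (c n * (starRingEnd ℂ ξ) * betaKL l k n) • φ (n - k + l) with hS2
  set T1 := ∑ n ∈ s, (c n * f n) • φ n with hT1
  set T2 := ∑ n ∈ s, (c n) • φ n with hT2
  set A := ∑ n ∈ s, (‖c n‖ * (‖ξ‖ * β n)) ^ 2 with hA
  have nS1 : ‖S1‖ ^ 2 = A := by
    rw [hS1, norm_sum_sq _ _ _ (fun x _ y _ h => by omega)]
    refine Finset.sum_congr rfl fun n hn => ?_
    rw [norm_mul, norm_mul, Complex.norm_real,
      Real.norm_of_nonneg (betaKL_nonneg k l n)]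
    ring
  have hS2' : S2 = ∑ n ∈ s.filter (fun n => k ≤ n),
      (c n * (starRingEnd ℂ ξ) * betaKL l k n) • φ (n - k + l) := by
    rw [hS2]
    refine (Finset.sum_subset (Finset.filter_subset _ s) fun x hx hnx => ?_).symm
    have hxk : x < k := by
      by_contra hc
      exact hnx (Finset.mem_filter.mpr ⟨hx, by omega⟩)
    rw [betaKL_lk_eq_zero hxk]
    simp
  have nS2 : ‖S2‖ ^ 2 ≤ A := by
    rw [hS2', norm_sum_sq _ _ _ (fun x hx y hy h => by
      simp only [Finset.coe_filter, Set.mem_setOf_eq] at hx hy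
      omega)]
    calc ∑ n ∈ s.filter (fun n => k ≤ n), ‖c n * (starRingEnd ℂ ξ) * betaKL l k n‖ ^ 2
        ≤ ∑ n ∈ s.filter (fun n => k ≤ n), (‖c n‖ * (‖ξ‖ * β n)) ^ 2 := by
          refine Finset.sum_le_sum fun n _ => ?_
          rw [norm_mul, norm_mul, Complex.norm_real,
            Real.norm_of_nonneg (betaKL_nonneg l k n), RCLike.norm_conj]
          refine pow_le_pow_left₀ (mul_nonneg (mul_nonneg (norm_nonneg _) (norm_nonneg _)) (betaKL_nonneg l k n)) ?_ 2
          calc ‖c n‖ * ‖ξ‖ * betaKL l k n ≤ ‖c n‖ * ‖ξ‖ * β n :=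
                mul_le_mul_of_nonneg_left (betaKL_le hlk.le n) (by positivity)
            _ = ‖c n‖ * (‖ξ‖ * β n) := by ring
      _ ≤ A := Finset.sum_le_sum_of_subset_of_nonneg (Finset.filter_subset _ s)
          (fun n _ _ => by positivity)
  have nT1 : ‖T1‖ ^ 2 = ∑ n ∈ s, (‖c n‖ * f n) ^ 2 := by
    rw [hT1, norm_sum_sq _ _ _ (fun x _ y _ h => h)]
    refine Finset.sum_congr rfl fun n hn => ?_
    rw [norm_mul, Complex.norm_real, Real.norm_of_nonneg (hf0 n)]
  have nT2 : ‖T2‖ ^ 2 = ∑ n ∈ s, ‖c n‖ ^ 2 := by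
    rw [hT2, norm_sum_sq _ _ _ (fun x _ y _ h => h)]
  set P : ℝ := (1 / κ * ‖T1‖) ^ 2 with hP
  set Q : ℝ := (‖ξ‖ * βN1 * ‖T2‖) ^ 2 with hQ
  have hβN1n : 0 ≤ βN1 := betaKL_nonneg k l (N - 1)
  have hAPQ : A ≤ P + Q := by
    have hP' : P = ∑ n ∈ s, (1 / κ * (‖c n‖ * f n)) ^ 2 := by
      rw [hP, mul_pow, nT1, Finset.mul_sum]
      exact Finset.sum_congr rfl fun n _ => by ring
    have hQ' : Q = ∑ n ∈ s, (‖ξ‖ * βN1 * ‖c n‖) ^ 2 := by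
      rw [hQ, mul_pow, nT2, Finset.mul_sum]
      exact Finset.sum_congr rfl fun n _ => by ring
    rw [hP', hQ', ← Finset.sum_add_distrib]
    refine Finset.sum_le_sum fun n _ => ?_
    have hβn : 0 ≤ β n := betaKL_nonneg k l n
    rcases le_or_gt N n with hn | hn
    · have h1 : ‖ξ‖ * β n ≤ 1 / κ * f n := by
        rw [div_mul_eq_mul_div, one_mul, le_div_iff₀ hκ]
        nlinarith [hfN n hn]
      have h3 : (‖c n‖ * (‖ξ‖ * β n)) ^ 2 ≤ (1 / κ * (‖c n‖ * f n)) ^ 2 := by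
        refine pow_le_pow_left₀ (mul_nonneg (norm_nonneg _) (mul_nonneg (norm_nonneg _) hβn)) ?_ 2
        calc ‖c n‖ * (‖ξ‖ * β n) ≤ ‖c n‖ * (1 / κ * f n) :=
              mul_le_mul_of_nonneg_left h1 (norm_nonneg _)
          _ = 1 / κ * (‖c n‖ * f n) := by ring
      nlinarith [sq_nonneg (‖ξ‖ * βN1 * ‖c n‖)]
    · have hb : β n ≤ βN1 := by
        rw [hβ, hβN1]
        exact betaKL_mono hlk.le (by omega)
      have h3 : (‖c n‖ * (‖ξ‖ * β n)) ^ 2 ≤ (‖ξ‖ * βN1 * ‖c n‖) ^ 2 := by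
        refine pow_le_pow_left₀ (mul_nonneg (norm_nonneg _) (mul_nonneg (norm_nonneg _) hβn)) ?_ 2
        calc ‖c n‖ * (‖ξ‖ * β n) ≤ ‖c n‖ * (‖ξ‖ * βN1) :=
              mul_le_mul_of_nonneg_left
                (mul_le_mul_of_nonneg_left hb (norm_nonneg _)) (norm_nonneg _)
          _ = ‖ξ‖ * βN1 * ‖c n‖ := by ring
      nlinarith [sq_nonneg (1 / κ * (‖c n‖ * f n))]
  have hPn : (0:ℝ) ≤ 1 / κ * ‖T1‖ := by positivity
  have hQn : (0:ℝ) ≤ ‖ξ‖ * βN1 * ‖T2‖ :=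
    mul_nonneg (mul_nonneg (norm_nonneg _) hβN1n) (norm_nonneg _)
  have hsqrtA : Real.sqrt A ≤ 1 / κ * ‖T1‖ + ‖ξ‖ * βN1 * ‖T2‖ := by
    calc Real.sqrt A ≤ Real.sqrt (P + Q) := Real.sqrt_le_sqrt hAPQ
      _ ≤ Real.sqrt P + Real.sqrt Q :=
          sqrt_add_le' (by rw [hP]; positivity) (by rw [hQ]; positivity)
      _ = 1 / κ * ‖T1‖ + ‖ξ‖ * βN1 * ‖T2‖ := by
          rw [hP, hQ, Real.sqrt_sq hPn, Real.sqrt_sq hQn]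
  have hS1le : ‖S1‖ ≤ Real.sqrt A := by
    rw [← Real.sqrt_sq (norm_nonneg S1), nS1]
  have hS2le : ‖S2‖ ≤ Real.sqrt A := by
    rw [← Real.sqrt_sq (norm_nonneg S2)]
    exact Real.sqrt_le_sqrt nS2
  calc ‖S1 + S2‖ ≤ ‖S1‖ + ‖S2‖ := norm_add_le _ _
    _ ≤ Real.sqrt A + Real.sqrt A := add_le_add hS1le hS2le
    _ = 2 * Real.sqrt A := by ring
    _ ≤ 2 * (1 / κ * ‖T1‖ + ‖ξ‖ * βN1 * ‖T2‖) := by linarith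
    _ = 2 / κ * ‖T1‖ + 2 * ‖ξ‖ * βN1 * ‖T2‖ := by ring
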